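/- arXiv:2011.11328 — 2 statements merged into one kernel-verified Lean document; each statement's English description precedes it below -/
import Mathlib

section
/- For m, n ≥ 4, every connected dominating set S of the n × m grid satisfies |S| ≥ ⌈mn/3⌉; that is, γ_c(G_{n,m}) ≥ ⌈mn/3⌉. -/
open Finset

/-- The infinite grid graph on `ℤ × ℤ`: two points are adjacent iff their
Manhattan distance is `1`. -/
def GridZ : SimpleGraph (ℤ × ℤ) where
  Adj u v := |u.1 - v.1| + |u.2 - v.2| = 1
  symm := by
    constructor
    intro u v h
    rw [abs_sub_comm v.1 u.1, abs_sub_comm v.2 u.2]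
    exact h
  loopless := by
    constructor
    intro u h
    simp at h

/-- The vertex set `[1,n] × [1,m]` of the `n × m` grid graph `G_{n,m}`. -/
def box (n m : ℕ) : Set (ℤ × ℤ) :=
  {p | 1 ≤ p.1 ∧ p.1 ≤ (n : ℤ) ∧ 1 ≤ p.2 ∧ p.2 ≤ (m : ℤ)}

instance (n m : ℕ) (p : ℤ × ℤ) : Decidable (p ∈ box n m) :=
  inferInstanceAs (Decidable (1 ≤ p.1 ∧ p.1 ≤ (n : ℤ) ∧ 1 ≤ p.2 ∧ p.2 ≤ (m : ℤ)))

/-- `S` is a connected dominating set of the grid `G_{n,m}`: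
`S ⊆ [1,n] × [1,m]`, the induced subgraph on `S` is connected, and every
vertex of the grid is in `S` or adjacent to a vertex of `S`. -/
def IsCDS (n m : ℕ) (S : Finset (ℤ × ℤ)) : Prop :=
  (S : Set (ℤ × ℤ)) ⊆ box n m ∧
    (GridZ.induce (S : Set (ℤ × ℤ))).Connected ∧
    ∀ v ∈ box n m, ∃ u ∈ S, u = v ∨ GridZ.Adj u v

/-- The closed neighbourhood of a vertex in the (enlarged) grid. -/
def closedNbr (v : ℤ × ℤ) : Finset (ℤ × ℤ) :=
  {v, (v.1 + 1, v.2), (v.1 - 1, v.2), (v.1, v.2 + 1), (v.1, v.2 - 1)}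

/-- The closed neighbourhood `N_{G'}[S]` of `S` in the enlarged grid `G'`. -/
def closedN (S : Finset (ℤ × ℤ)) : Finset (ℤ × ℤ) :=
  S.biUnion closedNbr

/-- The loss function `ℓ(S) = Σ_{v ∈ N_{G'}[S]} (|N_{G'}[v] ∩ S| - 1)`. -/
def loss (S : Finset (ℤ × ℤ)) : ℕ :=
  ∑ v ∈ closedN S, ((closedNbr v ∩ S).card - 1)

/-- The boundary of `G_{n,m}`: vertices of the grid with degree at most 3. -/
def boundary (n m : ℕ) : Set (ℤ × ℤ) :=
  {p | p ∈ box n m ∧ (((closedNbr p).erase p).filter (· ∈ box n m)).card ≤ 3}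

instance (n m : ℕ) (p : ℤ × ℤ) : Decidable (p ∈ boundary n m) :=
  inferInstanceAs
    (Decidable (p ∈ box n m ∧ (((closedNbr p).erase p).filter (· ∈ box n m)).card ≤ 3))

/-- The excess `e(S)`: the number of points of `S` on the boundary of the grid. -/
def excess (n m : ℕ) (S : Finset (ℤ × ℤ)) : ℕ :=
  (S.filter (fun p => p ∈ boundary n m)).card

/-- The four corners of `G_{n,m}`. -/
def corners (n m : ℕ) : Set (ℤ × ℤ) :=
  {((1 : ℤ), (1 : ℤ)), ((1 : ℤ), (m : ℤ)), ((n : ℤ), (1 : ℤ)), ((n : ℤ), (m : ℤ))}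

/-- The degree of a vertex `v` in the induced subgraph `G[S]`. -/
def degS (S : Finset (ℤ × ℤ)) (v : ℤ × ℤ) : ℕ :=
  (((closedNbr v).erase v) ∩ S).card

/-- The number of leaves (degree-1 vertices) of `G[S]`. -/
def numLeaves (S : Finset (ℤ × ℤ)) : ℕ := (S.filter (fun v => degS S v = 1)).card

/-- The number of degree-3 vertices of `G[S]`. -/
def numDeg3 (S : Finset (ℤ × ℤ)) : ℕ := (S.filter (fun v => degS S v = 3)).card

/-- The number of degree-4 vertices of `G[S]`. -/
def numDeg4 (S : Finset (ℤ × ℤ)) : ℕ := (S.filter (fun v => degS S v = 4)).card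

/-- A bend: a degree-2 vertex of `G[S]` having one vertical and one horizontal
neighbour in `S`. -/
def IsBend (S : Finset (ℤ × ℤ)) (v : ℤ × ℤ) : Prop :=
  degS S v = 2 ∧ ((v.1 + 1, v.2) ∈ S ∨ (v.1 - 1, v.2) ∈ S) ∧
    ((v.1, v.2 + 1) ∈ S ∨ (v.1, v.2 - 1) ∈ S)

instance (S : Finset (ℤ × ℤ)) (v : ℤ × ℤ) : Decidable (IsBend S v) :=
  inferInstanceAs (Decidable (_ ∧ _ ∧ _))

/-- The number of bends of `G[S]`. -/
def numBends (S : Finset (ℤ × ℤ)) : ℕ := (S.filter (fun v => IsBend S v)).card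

/-- The connected domination number `γ_c(G_{n,m})`. -/
noncomputable def connDomNum (n m : ℕ) : ℕ :=
  sInf {k | ∃ S : Finset (ℤ × ℤ), IsCDS n m S ∧ S.card = k}

/-- A maximal horizontal line segment of `G[S]`: the vertices `(i,a),…,(i,b)`
all lie in `S`, and the segment cannot be extended in row `i`. -/
def IsMaxHSeg (S : Finset (ℤ × ℤ)) (i a b : ℤ) : Prop :=
  a ≤ b ∧ (∀ j, a ≤ j → j ≤ b → (i, j) ∈ S) ∧ (i, a - 1) ∉ S ∧ (i, b + 1) ∉ S

/-- A maximal vertical line segment of `G[S]`: the vertices `(a,j),…,(b,j)`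
all lie in `S`, and the segment cannot be extended in column `j`. -/
def IsMaxVSeg (S : Finset (ℤ × ℤ)) (j a b : ℤ) : Prop :=
  a ≤ b ∧ (∀ i, a ≤ i → i ≤ b → (i, j) ∈ S) ∧ (a - 1, j) ∉ S ∧ (b + 1, j) ∉ S

/-! ### Auxiliary lemmas -/

section Aux

instance : DecidableRel GridZ.Adj := fun u v =>
  inferInstanceAs (Decidable (|u.1 - v.1| + |u.2 - v.2| = 1))

lemma mem_closedNbr_iff {u v : ℤ × ℤ} :
    u ∈ closedNbr v ↔ |u.1 - v.1| + |u.2 - v.2| ≤ 1 := by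
  simp only [closedNbr, Finset.mem_insert, Finset.mem_singleton, Prod.ext_iff]
  rcases abs_cases (u.1 - v.1) with ⟨h1, h1'⟩ | ⟨h1, h1'⟩ <;>
    rcases abs_cases (u.2 - v.2) with ⟨h2, h2'⟩ | ⟨h2, h2'⟩ <;>
      rw [h1, h2] <;> omega

lemma gridZ_adj_iff {v u : ℤ × ℤ} :
    GridZ.Adj v u ↔ |u.1 - v.1| + |u.2 - v.2| = 1 := by
  show |v.1 - u.1| + |v.2 - u.2| = 1 ↔ _
  rw [abs_sub_comm v.1, abs_sub_comm v.2]

lemma adj_iff_mem {v u : ℤ × ℤ} :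
    GridZ.Adj v u ↔ (u ∈ closedNbr v ∧ u ≠ v) := by
  rw [gridZ_adj_iff, mem_closedNbr_iff, ne_eq, Prod.ext_iff]
  rcases abs_cases (u.1 - v.1) with ⟨h1, h1'⟩ | ⟨h1, h1'⟩ <;>
    rcases abs_cases (u.2 - v.2) with ⟨h2, h2'⟩ | ⟨h2, h2'⟩ <;>
      rw [h1, h2] <;> omega

lemma mem_closedNbr_comm {u v : ℤ × ℤ} :
    u ∈ closedNbr v ↔ v ∈ closedNbr u := by
  rw [mem_closedNbr_iff, mem_closedNbr_iff, abs_sub_comm u.1, abs_sub_comm u.2]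

lemma self_mem_closedNbr (v : ℤ × ℤ) : v ∈ closedNbr v :=
  mem_closedNbr_iff.2 (by simp)

lemma card_closedNbr (v : ℤ × ℤ) : (closedNbr v).card = 5 := by
  have himg : closedNbr v =
      ({((0:ℤ),(0:ℤ)), (1,0), (-1,0), (0,1), (0,-1)} : Finset (ℤ × ℤ)).image
        (fun p => (p.1 + v.1, p.2 + v.2)) := by
    ext ⟨x, y⟩
    simp only [closedNbr, Finset.mem_insert, Finset.mem_singleton, Finset.mem_image,
      Prod.ext_iff, Prod.exists]
    constructor
    · rintro (⟨hx, hy⟩ | ⟨hx, hy⟩ | ⟨hx, hy⟩ | ⟨hx, hy⟩ | ⟨hx, hy⟩)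
      · exact ⟨0, 0, by omega⟩
      · exact ⟨1, 0, by omega⟩
      · exact ⟨-1, 0, by omega⟩
      · exact ⟨0, 1, by omega⟩
      · exact ⟨0, -1, by omega⟩
    · rintro ⟨a, b, hab, hx, hy⟩
      omega
  rw [himg, Finset.card_image_of_injective _ (fun p q h => by
    simp only [Prod.ext_iff] at h ⊢; omega)]
  decide

/-- The box as a `Finset`. -/
noncomputable def Bx (n m : ℕ) : Finset (ℤ × ℤ) := Finset.Icc (1:ℤ) n ×ˢ Finset.Icc (1:ℤ) m

lemma mem_Bx {n m : ℕ} {p : ℤ × ℤ} : p ∈ Bx n m ↔ p ∈ box n m := by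
  rw [Bx, Finset.mem_product, Finset.mem_Icc, Finset.mem_Icc]
  exact ⟨fun ⟨⟨a, b⟩, ⟨c, d⟩⟩ => ⟨a, b, c, d⟩, fun ⟨a, b, c, d⟩ => ⟨⟨a, b⟩, ⟨c, d⟩⟩⟩

lemma card_Bx (n m : ℕ) : (Bx n m).card = m * n := by
  rw [Bx, Finset.card_product, Int.card_Icc, Int.card_Icc]
  simp [mul_comm]

instance (s : Set (ℤ × ℤ)) : DecidableRel (GridZ.induce s).Adj :=
  fun a b => inferInstanceAs (Decidable (GridZ.Adj a b))

open SimpleGraph in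
/-- A finite connected graph has at least `|V| - 1` edges. -/
lemma conn_card_le_edges {V : Type*} [Fintype V] [DecidableEq V] {G : SimpleGraph V}
    [DecidableRel G.Adj] (h : G.Connected) :
    Fintype.card V ≤ G.edgeFinset.card + 1 := by
  classical
  obtain ⟨r⟩ := h.nonempty
  have key : ∀ v : V, v ≠ r → ∃ u : V, G.Adj v u ∧ G.dist r u < G.dist r v := by
    intro v hv
    obtain ⟨p, hp⟩ := (h.exists_walk_length_eq_dist r v)
    have hpos : 0 < G.dist r v := h.pos_dist_of_ne (Ne.symm hv)
    have hnn : ¬ p.reverse.Nil := Walk.not_nil_of_ne hv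
    obtain ⟨u, hadj, q, hq⟩ := Walk.not_nil_iff.mp hnn
    refine ⟨u, hadj, ?_⟩
    have hlen : q.length + 1 = p.length := by
      have := congrArg Walk.length hq
      simpa [Walk.length_reverse] using this.symm
    have hd : G.dist r u ≤ q.reverse.length := SimpleGraph.dist_le _
    rw [Walk.length_reverse] at hd
    omega
  have key2 : ∀ v : V, ∃ u : V, (v ≠ r → G.Adj v u ∧ G.dist r u < G.dist r v) := by
    intro v
    by_cases hv : v = r
    · exact ⟨v, fun h => absurd hv h⟩
    · obtain ⟨w, h1, h2⟩ := key v hv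
      exact ⟨w, fun _ => ⟨h1, h2⟩⟩
  choose u hu using key2
  have hcard : (Finset.univ.erase r).card ≤ G.edgeFinset.card := by
    apply Finset.card_le_card_of_injOn (fun v => s(v, u v))
    · intro v hv
      have hvr : v ≠ r := by simpa using hv
      rw [Finset.mem_coe, SimpleGraph.mem_edgeFinset, SimpleGraph.mem_edgeSet]
      exact (hu v hvr).1
    · intro v hv w hw hvw
      have hvr : v ≠ r := by simpa using hv
      have hwr : w ≠ r := by simpa using hw
      rcases Sym2.eq_iff.mp hvw with ⟨h1, _⟩ | ⟨h1, h2⟩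
      · exact h1
      · exfalso
        have d1 := (hu v hvr).2
        have d2 := (hu w hwr).2
        rw [h2] at d1
        rw [← h1] at d2
        omega
  have hr : r ∈ (Finset.univ : Finset V) := Finset.mem_univ r
  have : (Finset.univ.erase r).card = Fintype.card V - 1 := by
    rw [Finset.card_erase_of_mem hr, Finset.card_univ]
  have hpos : 1 ≤ Fintype.card V := Fintype.card_pos_iff.mpr ⟨r⟩
  omega

lemma degree_eq_degS (S : Finset (ℤ × ℤ)) (v : ↥(S : Set (ℤ × ℤ))) :
    (GridZ.induce (S : Set (ℤ × ℤ))).degree v = degS S (v : ℤ × ℤ) := by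
  classical
  rw [← SimpleGraph.card_neighborFinset_eq_degree, degS]
  refine Finset.card_bij (fun u _ => (u : ℤ × ℤ)) ?_ ?_ ?_
  · intro u hu
    rw [SimpleGraph.mem_neighborFinset] at hu
    have hadj : GridZ.Adj (v : ℤ × ℤ) (u : ℤ × ℤ) := hu
    rw [Finset.mem_inter, Finset.mem_erase]
    refine ⟨⟨?_, (adj_iff_mem.mp hadj).1⟩, u.2⟩
    exact fun h => (adj_iff_mem.mp hadj).2 (by exact_mod_cast h)
  · intro a _ b _ hab
    exact Subtype.ext hab
  · intro w hw
    rw [Finset.mem_inter, Finset.mem_erase] at hw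
    obtain ⟨⟨hne, hmem⟩, hwS⟩ := hw
    refine ⟨⟨w, hwS⟩, ?_, rfl⟩
    rw [SimpleGraph.mem_neighborFinset]
    exact (adj_iff_mem.mpr ⟨hmem, hne⟩ : GridZ.Adj (v : ℤ × ℤ) w)

lemma sum_degS_ge (S : Finset (ℤ × ℤ))
    (hconn : (GridZ.induce (S : Set (ℤ × ℤ))).Connected) :
    2 * (S.card - 1) ≤ ∑ v ∈ S, degS S v := by
  classical
  have h1 := conn_card_le_edges hconn
  have h2 := SimpleGraph.sum_degrees_eq_twice_card_edges (GridZ.induce (S : Set (ℤ × ℤ)))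
  have hc : Fintype.card ↥(S : Set (ℤ × ℤ)) = S.card := Fintype.card_coe S
  have h3 : ∑ v : ↥(S : Set (ℤ × ℤ)), (GridZ.induce (S : Set (ℤ × ℤ))).degree v
      = ∑ v ∈ S, degS S v := by
    rw [← Finset.sum_finset_coe (degS S) S]
    exact Finset.sum_congr rfl fun v _ => degree_eq_degS S v
  rw [h3] at h2
  omega

lemma closedNbr_subset_closedN {S : Finset (ℤ × ℤ)} {u : ℤ × ℤ} (hu : u ∈ S) :
    closedNbr u ⊆ closedN S := fun w hw => Finset.mem_biUnion.mpr ⟨u, hu, hw⟩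

lemma count_eq (S : Finset (ℤ × ℤ)) :
    ∑ w ∈ closedN S, (closedNbr w ∩ S).card = 5 * S.card := by
  classical
  have h1 : ∀ w, (closedNbr w ∩ S).card = ∑ u ∈ S, if w ∈ closedNbr u then 1 else 0 := by
    intro w
    rw [Finset.sum_boole, Nat.cast_id]
    congr 1
    ext u
    simp only [Finset.mem_inter, Finset.mem_filter]
    rw [@mem_closedNbr_comm w u, and_comm]
  calc ∑ w ∈ closedN S, (closedNbr w ∩ S).card
      = ∑ w ∈ closedN S, ∑ u ∈ S, if w ∈ closedNbr u then 1 else 0 :=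
        Finset.sum_congr rfl fun w _ => h1 w
    _ = ∑ u ∈ S, ∑ w ∈ closedN S, if w ∈ closedNbr u then 1 else 0 := Finset.sum_comm
    _ = ∑ u ∈ S, (5 : ℕ) := by
        refine Finset.sum_congr rfl fun u hu => ?_
        rw [Finset.sum_boole, Nat.cast_id]
        have : (closedN S).filter (· ∈ closedNbr u) = closedNbr u := by
          apply Finset.Subset.antisymm
          · intro w hw; exact (Finset.mem_filter.mp hw).2
          · intro w hw
            exact Finset.mem_filter.mpr ⟨closedNbr_subset_closedN hu hw, hw⟩
        rw [this, card_closedNbr]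
    _ = 5 * S.card := by rw [Finset.sum_const, smul_eq_mul, mul_comm]

lemma near_corner_low {n m : ℕ} {S : Finset (ℤ × ℤ)} (hn : 1 ≤ n) (hm : 1 ≤ m)
    (hS : IsCDS n m S) :
    ∃ p ∈ closedN S, (p.1 ≤ 0 ∨ p.2 ≤ 0) ∧ p.1 + p.2 ≤ 2 := by
  obtain ⟨hsub, _, hdom⟩ := hS
  have hc : ((1:ℤ), (1:ℤ)) ∈ box n m := by
    constructor
    · norm_num
    refine ⟨by exact_mod_cast Nat.one_le_cast.mpr hn, by norm_num, ?_⟩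
    exact_mod_cast Nat.one_le_cast.mpr hm
  obtain ⟨u, huS, hu⟩ := hdom _ hc
  have hub : u ∈ box n m := hsub huS
  obtain ⟨hu1, _, hu2, _⟩ := hub
  have hnear : |u.1 - 1| + |u.2 - 1| ≤ 1 := by
    rcases hu with rfl | hadj
    · simp
    · rw [gridZ_adj_iff] at hadj
      have h : |u.1 - 1| + |u.2 - 1| = 1 := by
        rw [abs_sub_comm u.1, abs_sub_comm u.2]
        exact hadj
      omega
  have hcase : (u.1 = 1 ∧ u.2 = 1) ∨ (u.1 = 2 ∧ u.2 = 1) ∨ (u.1 = 1 ∧ u.2 = 2) := by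
    rcases abs_cases (u.1 - 1) with ⟨h1, h1'⟩ | ⟨h1, h1'⟩ <;>
      rcases abs_cases (u.2 - 1) with ⟨h2, h2'⟩ | ⟨h2, h2'⟩ <;>
        rw [h1, h2] at hnear <;> omega
  have hmemL : (u.1 - 1, u.2) ∈ closedNbr u := by
    rw [mem_closedNbr_iff]
    have h1 : u.1 - 1 - u.1 = -1 := by ring
    have h2 : u.2 - u.2 = 0 := by ring
    show |u.1 - 1 - u.1| + |u.2 - u.2| ≤ 1
    rw [h1, h2]
    norm_num
  have hmemD : (u.1, u.2 - 1) ∈ closedNbr u := by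
    rw [mem_closedNbr_iff]
    have h1 : u.1 - u.1 = 0 := by ring
    have h2 : u.2 - 1 - u.2 = -1 := by ring
    show |u.1 - u.1| + |u.2 - 1 - u.2| ≤ 1
    rw [h1, h2]
    norm_num
  rcases hcase with ⟨hx, hy⟩ | ⟨hx, hy⟩ | ⟨hx, hy⟩
  · exact ⟨(u.1 - 1, u.2), closedNbr_subset_closedN huS hmemL,
      Or.inl (show u.1 - 1 ≤ 0 by omega), show u.1 - 1 + u.2 ≤ 2 by omega⟩
  · exact ⟨(u.1, u.2 - 1), closedNbr_subset_closedN huS hmemD,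
      Or.inr (show u.2 - 1 ≤ 0 by omega), show u.1 + (u.2 - 1) ≤ 2 by omega⟩
  · exact ⟨(u.1 - 1, u.2), closedNbr_subset_closedN huS hmemL,
      Or.inl (show u.1 - 1 ≤ 0 by omega), show u.1 - 1 + u.2 ≤ 2 by omega⟩

lemma near_corner_high {n m : ℕ} {S : Finset (ℤ × ℤ)} (hn : 1 ≤ n) (hm : 1 ≤ m)
    (hS : IsCDS n m S) :
    ∃ p ∈ closedN S, (((n:ℤ) < p.1) ∨ ((m:ℤ) < p.2)) ∧ (n:ℤ) + (m:ℤ) ≤ p.1 + p.2 := by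
  obtain ⟨hsub, _, hdom⟩ := hS
  have hc : ((n:ℤ), (m:ℤ)) ∈ box n m := by
    refine ⟨by exact_mod_cast Nat.one_le_cast.mpr hn, le_refl _, ?_, le_refl _⟩
    exact_mod_cast Nat.one_le_cast.mpr hm
  obtain ⟨u, huS, hu⟩ := hdom _ hc
  have hub : u ∈ box n m := hsub huS
  obtain ⟨_, hu1, _, hu2⟩ := hub
  have hnear : |u.1 - (n:ℤ)| + |u.2 - (m:ℤ)| ≤ 1 := by
    rcases hu with rfl | hadj
    · simp
    · rw [gridZ_adj_iff] at hadj
      have h : |u.1 - (n:ℤ)| + |u.2 - (m:ℤ)| = 1 := by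
        rw [abs_sub_comm u.1, abs_sub_comm u.2]
        exact hadj
      omega
  have hcase : (u.1 = (n:ℤ) ∧ u.2 = (m:ℤ)) ∨ (u.1 = (n:ℤ) - 1 ∧ u.2 = (m:ℤ)) ∨
      (u.1 = (n:ℤ) ∧ u.2 = (m:ℤ) - 1) := by
    rcases abs_cases (u.1 - (n:ℤ)) with ⟨h1, h1'⟩ | ⟨h1, h1'⟩ <;>
      rcases abs_cases (u.2 - (m:ℤ)) with ⟨h2, h2'⟩ | ⟨h2, h2'⟩ <;>
        rw [h1, h2] at hnear <;> omega
  have hmemR : (u.1 + 1, u.2) ∈ closedNbr u := by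
    rw [mem_closedNbr_iff]
    have h1 : u.1 + 1 - u.1 = 1 := by ring
    have h2 : u.2 - u.2 = 0 := by ring
    show |u.1 + 1 - u.1| + |u.2 - u.2| ≤ 1
    rw [h1, h2]
    norm_num
  have hmemU : (u.1, u.2 + 1) ∈ closedNbr u := by
    rw [mem_closedNbr_iff]
    have h1 : u.1 - u.1 = 0 := by ring
    have h2 : u.2 + 1 - u.2 = 1 := by ring
    show |u.1 - u.1| + |u.2 + 1 - u.2| ≤ 1
    rw [h1, h2]
    norm_num
  rcases hcase with ⟨hx, hy⟩ | ⟨hx, hy⟩ | ⟨hx, hy⟩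
  · exact ⟨(u.1 + 1, u.2), closedNbr_subset_closedN huS hmemR,
      Or.inl (show (n:ℤ) < u.1 + 1 by omega), show (n:ℤ) + (m:ℤ) ≤ u.1 + 1 + u.2 by omega⟩
  · exact ⟨(u.1, u.2 + 1), closedNbr_subset_closedN huS hmemU,
      Or.inr (show (m:ℤ) < u.2 + 1 by omega), show (n:ℤ) + (m:ℤ) ≤ u.1 + (u.2 + 1) by omega⟩
  · exact ⟨(u.1 + 1, u.2), closedNbr_subset_closedN huS hmemR,
      Or.inl (show (n:ℤ) < u.1 + 1 by omega), show (n:ℤ) + (m:ℤ) ≤ u.1 + 1 + u.2 by omega⟩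

/-- The main counting bound: every CDS has `m*n + 2 ≤ 3|S| + 2`. -/
lemma cds_main_bound {n m : ℕ} (hn : 4 ≤ n) (hm : 4 ≤ m) {S : Finset (ℤ × ℤ)}
    (hS : IsCDS n m S) : (m * n + 2) / 3 ≤ S.card := by
  classical
  obtain ⟨hsub, hconn, hdom⟩ := hS
  have hn1 : 1 ≤ n := by omega
  have hm1 : 1 ≤ m := by omega
  -- the box is inside closedN S
  have hboxsub : Bx n m ⊆ closedN S := by
    intro v hv
    obtain ⟨u, huS, hu⟩ := hdom v (mem_Bx.mp hv)
    refine closedNbr_subset_closedN huS ?_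
    rcases hu with rfl | hadj
    · exact self_mem_closedNbr _
    · exact (adj_iff_mem.mp hadj).1
  obtain ⟨p1, hp1N, hp1a, hp1b⟩ := near_corner_low hn1 hm1 ⟨hsub, hconn, hdom⟩
  obtain ⟨p2, hp2N, hp2a, hp2b⟩ := near_corner_high hn1 hm1 ⟨hsub, hconn, hdom⟩
  have hp1box : p1 ∉ Bx n m := by
    rw [mem_Bx]
    intro ⟨h1, h2, h3, h4⟩
    omega
  have hp2box : p2 ∉ Bx n m := by
    rw [mem_Bx]
    intro ⟨h1, h2, h3, h4⟩
    omega
  have hp12 : p1 ≠ p2 := by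
    intro h
    rw [h] at hp1b
    have : (4:ℤ) ≤ (n:ℤ) := by exact_mod_cast hn
    have : (4:ℤ) ≤ (m:ℤ) := by exact_mod_cast hm
    omega
  -- lower bound on |closedN S|
  have hNlow : m * n + 2 ≤ (closedN S).card := by
    have hsub2 : insert p1 (insert p2 (Bx n m)) ⊆ closedN S := by
      intro x hx
      rcases Finset.mem_insert.mp hx with rfl | hx
      · exact hp1N
      rcases Finset.mem_insert.mp hx with rfl | hx
      · exact hp2N
      · exact hboxsub hx
    have hcard2 : (insert p1 (insert p2 (Bx n m))).card = m * n + 2 := by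
      rw [Finset.card_insert_of_notMem, Finset.card_insert_of_notMem hp2box, card_Bx]
      rw [Finset.mem_insert]
      push_neg
      exact ⟨hp12, hp1box⟩
    calc m * n + 2 = (insert p1 (insert p2 (Bx n m))).card := hcard2.symm
      _ ≤ (closedN S).card := Finset.card_le_card hsub2
  -- S nonempty
  have hSne : S.Nonempty := by
    obtain ⟨u, huS, _⟩ := hdom _ (mem_Bx.mp (show ((1:ℤ),(1:ℤ)) ∈ Bx n m by
      rw [mem_Bx]
      exact ⟨by norm_num, by exact_mod_cast Nat.one_le_cast.mpr hn1, by norm_num,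
        by exact_mod_cast Nat.one_le_cast.mpr hm1⟩))
    exact ⟨u, huS⟩
  -- upper bound: |closedN S| ≤ 3|S| + 2
  have hSsubN : S ⊆ closedN S := fun u hu => closedNbr_subset_closedN hu (self_mem_closedNbr u)
  have hsplit : ∑ w ∈ closedN S, (closedNbr w ∩ S).card
      = ∑ w ∈ S, (closedNbr w ∩ S).card + ∑ w ∈ closedN S \ S, (closedNbr w ∩ S).card := by
    rw [← Finset.sum_union (Finset.disjoint_sdiff), Finset.union_sdiff_of_subset hSsubN]
  have hS_part : ∑ w ∈ S, (closedNbr w ∩ S).card = S.card + ∑ w ∈ S, degS S w := by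
    rw [Finset.card_eq_sum_ones S, ← Finset.sum_add_distrib]
    refine Finset.sum_congr rfl fun w hw => ?_
    have : closedNbr w ∩ S = insert w ((closedNbr w).erase w ∩ S) := by
      ext x
      simp only [Finset.mem_inter, Finset.mem_insert, Finset.mem_erase]
      constructor
      · rintro ⟨hx1, hx2⟩
        by_cases hxw : x = w
        · exact Or.inl hxw
        · exact Or.inr ⟨⟨hxw, hx1⟩, hx2⟩
      · rintro (rfl | ⟨⟨_, hx1⟩, hx2⟩)
        · exact ⟨self_mem_closedNbr _, hw⟩
        · exact ⟨hx1, hx2⟩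
    rw [this, Finset.card_insert_of_notMem (by
      simp only [Finset.mem_inter, Finset.mem_erase]
      rintro ⟨⟨h, _⟩, _⟩
      exact h rfl), degS]
    omega
  have hrest : (closedN S \ S).card ≤ ∑ w ∈ closedN S \ S, (closedNbr w ∩ S).card := by
    rw [Finset.card_eq_sum_ones]
    refine Finset.sum_le_sum fun w hw => ?_
    have hwN : w ∈ closedN S := (Finset.mem_sdiff.mp hw).1
    obtain ⟨u, huS, hw2⟩ := Finset.mem_biUnion.mp hwN
    have : u ∈ closedNbr w ∩ S :=
      Finset.mem_inter.mpr ⟨mem_closedNbr_comm.mp hw2, huS⟩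
    exact Finset.card_pos.mpr ⟨u, this⟩
  have hdeg := sum_degS_ge S hconn
  have hcount := count_eq S
  have hsd : (closedN S \ S).card = (closedN S).card - S.card := Finset.card_sdiff_of_subset hSsubN
  have hScard : 1 ≤ S.card := Finset.card_pos.mpr hSne
  have hle : (closedN S).card ≤ S.card + S.card + 2 + S.card := by
    have hNS : S.card ≤ (closedN S).card := Finset.card_le_card hSsubN
    omega
  omega

/-- The whole box is a connected dominating set. -/
lemma box_isCDS (n m : ℕ) (hn : 1 ≤ n) (hm : 1 ≤ m) : IsCDS n m (Bx n m) := by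
  classical
  have hroot : ((1:ℤ),(1:ℤ)) ∈ (Bx n m : Set (ℤ × ℤ)) := by
    rw [Finset.mem_coe, mem_Bx]
    exact ⟨le_refl _, by exact_mod_cast Nat.one_le_cast.mpr hn, le_refl _,
      by exact_mod_cast Nat.one_le_cast.mpr hm⟩
  refine ⟨fun p hp => mem_Bx.mp hp, ?_, fun v hv => ⟨v, mem_Bx.mpr hv, Or.inl rfl⟩⟩
  rw [SimpleGraph.connected_iff]
  constructor
  · -- preconnected
    have key : ∀ k : ℕ, ∀ a : ↥(Bx n m : Set (ℤ × ℤ)),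
        ((a : ℤ × ℤ).1 + (a : ℤ × ℤ).2).toNat = k →
        (GridZ.induce (Bx n m : Set (ℤ × ℤ))).Reachable ⟨((1:ℤ),(1:ℤ)), hroot⟩ a := by
      intro k
      induction k using Nat.strong_induction_on with
      | _ k ih =>
        rintro ⟨⟨x, y⟩, ha⟩ hk
        have hk' : (x + y).toNat = k := hk
        have hmem : 1 ≤ x ∧ x ≤ (n:ℤ) ∧ 1 ≤ y ∧ y ≤ (m:ℤ) := by
          have := mem_Bx.mp (Finset.mem_coe.mp ha)
          exact this
        obtain ⟨hx1, hx2, hy1, hy2⟩ := hmem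
        by_cases hx : 1 < x
        · have hb : ((x - 1, y) : ℤ × ℤ) ∈ (Bx n m : Set (ℤ × ℤ)) := by
            rw [Finset.mem_coe, mem_Bx]
            exact ⟨by omega, by omega, hy1, hy2⟩
          have hadj : (GridZ.induce (Bx n m : Set (ℤ × ℤ))).Adj ⟨(x - 1, y), hb⟩
              ⟨(x, y), ha⟩ := by
            show GridZ.Adj (x - 1, y) (x, y)
            rw [gridZ_adj_iff]
            simp
          have hreach := ih ((x - 1) + y).toNat (by omega) ⟨(x - 1, y), hb⟩ rfl
          exact hreach.trans hadj.reachable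
        · by_cases hy : 1 < y
          · have hb : ((x, y - 1) : ℤ × ℤ) ∈ (Bx n m : Set (ℤ × ℤ)) := by
              rw [Finset.mem_coe, mem_Bx]
              exact ⟨hx1, hx2, by omega, by omega⟩
            have hadj : (GridZ.induce (Bx n m : Set (ℤ × ℤ))).Adj ⟨(x, y - 1), hb⟩
                ⟨(x, y), ha⟩ := by
              show GridZ.Adj (x, y - 1) (x, y)
              rw [gridZ_adj_iff]
              simp
            have hreach := ih (x + (y - 1)).toNat (by omega) ⟨(x, y - 1), hb⟩ rfl
            exact hreach.trans hadj.reachable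
          · have hxy : x = 1 ∧ y = 1 := by omega
            have : (⟨(x, y), ha⟩ : ↥(Bx n m : Set (ℤ × ℤ)))
                = ⟨((1:ℤ),(1:ℤ)), hroot⟩ := by
              apply Subtype.ext
              simp [hxy.1, hxy.2]
            rw [this]
    intro a b
    exact ((key _ a rfl).symm).trans (key _ b rfl)
  · exact ⟨⟨((1:ℤ),(1:ℤ)), hroot⟩⟩

/-- Bound 1. For `m, n ≥ 4`, every connected dominating set of
`G_{n,m}` has size at least `⌈mn/3⌉`; hence `γ_c(G_{n,m}) ≥ ⌈mn/3⌉`. -/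
theorem cds_card_ge_ceil_third (n m : ℕ) (hn : 4 ≤ n) (hm : 4 ≤ m) :
    (∀ S : Finset (ℤ × ℤ), IsCDS n m S → (m * n + 2) / 3 ≤ S.card) ∧
      (m * n + 2) / 3 ≤ connDomNum n m := by
  constructor
  · exact fun S hS => cds_main_bound hn hm hS
  · have hne : {k | ∃ S : Finset (ℤ × ℤ), IsCDS n m S ∧ S.card = k}.Nonempty :=
      ⟨(Bx n m).card, Bx n m, box_isCDS n m (by omega) (by omega), rfl⟩
    obtain ⟨S, hS, hcard⟩ := Nat.sInf_mem hne
    rw [connDomNum, ← hcard]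
    exact cds_main_bound hn hm hS
end Aux
end

section
/- For m, n ≥ 4, γ_c(G_{n,m}) ≤ min{ 2n + (m−4) + ⌊(m−4)/3⌋·(n−2), 2m + (n−4) + ⌊(n−4)/3⌋·(m−2) }. -/
open Finset

lemma gridZ_adj {u v : ℤ × ℤ} : GridZ.Adj u v ↔ |u.1 - v.1| + |u.2 - v.2| = 1 := Iff.rfl

lemma gridZ_adj' {u v : ℤ × ℤ}
    (h : (u.1 = v.1 ∧ (u.2 = v.2 + 1 ∨ u.2 = v.2 - 1)) ∨
         (u.2 = v.2 ∧ (u.1 = v.1 + 1 ∨ u.1 = v.1 - 1))) : GridZ.Adj u v := by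
  rw [gridZ_adj]
  rcases h with ⟨h1, h2 | h2⟩ | ⟨h1, h2 | h2⟩ <;> rw [h1, h2] <;> simp

noncomputable def Dset (n m : ℕ) : Finset (ℤ × ℤ) :=
  ((Finset.Icc (1:ℤ) (n:ℤ)).image fun i => (i, (2:ℤ))) ∪
  ((Finset.Icc (1:ℤ) (n:ℤ)).image fun i => (i, (m:ℤ) - 1)) ∪
  ((Finset.Icc (3:ℤ) ((m:ℤ) - 2)).image fun j => ((2:ℤ), j)) ∪
  (((Finset.Icc (1:ℤ) (((m-4)/3 : ℕ) : ℤ)) ×ˢ (Finset.Icc (3:ℤ) (n:ℤ))).image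
     fun kq => (kq.2, 2 + 3 * kq.1))

lemma mem_Dset {n m : ℕ} {p : ℤ × ℤ} : p ∈ Dset n m ↔
    (1 ≤ p.1 ∧ p.1 ≤ (n:ℤ) ∧ p.2 = 2) ∨
    (1 ≤ p.1 ∧ p.1 ≤ (n:ℤ) ∧ p.2 = (m:ℤ) - 1) ∨
    (p.1 = 2 ∧ 3 ≤ p.2 ∧ p.2 ≤ (m:ℤ) - 2) ∨
    (∃ k : ℤ, 1 ≤ k ∧ k ≤ (((m-4)/3 : ℕ) : ℤ) ∧ 3 ≤ p.1 ∧ p.1 ≤ (n:ℤ) ∧ p.2 = 2 + 3 * k) := by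
  obtain ⟨x, y⟩ := p
  simp only [Dset, Finset.mem_union, Finset.mem_image, Finset.mem_product, Finset.mem_Icc,
    Prod.ext_iff, Finset.mem_product]
  constructor
  · rintro (((⟨i, hi, rfl, rfl⟩ | ⟨i, hi, rfl, rfl⟩) | ⟨j, hj, rfl, rfl⟩) | ⟨⟨k, i⟩, hk, rfl, rfl⟩)
    · exact Or.inl ⟨hi.1, hi.2, rfl⟩
    · exact Or.inr (Or.inl ⟨hi.1, hi.2, rfl⟩)
    · exact Or.inr (Or.inr (Or.inl ⟨rfl, hj.1, hj.2⟩))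
    · exact Or.inr (Or.inr (Or.inr ⟨k, hk.1.1, hk.1.2, hk.2.1, hk.2.2, rfl⟩))
  · rintro (⟨h1, h2, rfl⟩ | ⟨h1, h2, rfl⟩ | ⟨rfl, h1, h2⟩ | ⟨k, h1, h2, h3, h4, rfl⟩)
    · exact Or.inl (Or.inl (Or.inl ⟨x, ⟨h1, h2⟩, rfl, rfl⟩))
    · exact Or.inl (Or.inl (Or.inr ⟨x, ⟨h1, h2⟩, rfl, rfl⟩))
    · exact Or.inl (Or.inr ⟨y, ⟨h1, h2⟩, rfl, rfl⟩)
    · exact Or.inr ⟨⟨k, x⟩, ⟨⟨h1, h2⟩, h3, h4⟩, rfl, rfl⟩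

lemma Dset_card_le {n m : ℕ} (hn : 4 ≤ n) (hm : 4 ≤ m) :
    (Dset n m).card ≤ 2 * n + (m - 4) + ((m - 4) / 3) * (n - 2) := by
  have h1 : ((Finset.Icc (1:ℤ) (n:ℤ)).image fun i => (i, (2:ℤ))).card ≤ n := by
    refine (Finset.card_image_le).trans ?_
    rw [Int.card_Icc]; omega
  have h2 : ((Finset.Icc (1:ℤ) (n:ℤ)).image fun i => (i, (m:ℤ) - 1)).card ≤ n := by
    refine (Finset.card_image_le).trans ?_
    rw [Int.card_Icc]; omega
  have h3 : ((Finset.Icc (3:ℤ) ((m:ℤ) - 2)).image fun j => ((2:ℤ), j)).card ≤ m - 4 := by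
    refine (Finset.card_image_le).trans ?_
    rw [Int.card_Icc]; omega
  have h4 : (((Finset.Icc (1:ℤ) (((m-4)/3 : ℕ) : ℤ)) ×ˢ (Finset.Icc (3:ℤ) (n:ℤ))).image
      fun kq : ℤ × ℤ => (kq.2, 2 + 3 * kq.1)).card ≤ ((m - 4) / 3) * (n - 2) := by
    refine (Finset.card_image_le).trans ?_
    rw [Finset.card_product, Int.card_Icc, Int.card_Icc]
    have : ((((m-4)/3 : ℕ) : ℤ) + 1 - 1).toNat = (m-4)/3 := by omega
    rw [this]
    have : (((n:ℤ)) + 1 - 3).toNat = n - 2 := by omega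
    rw [this]
  calc (Dset n m).card
      ≤ _ + _ := Finset.card_union_le _ _
    _ ≤ (_ + _) + _ := by gcongr ?_ + _; exact Finset.card_union_le _ _
    _ ≤ ((_ + _) + _) + _ := by gcongr (?_ + _) + _; exact Finset.card_union_le _ _
    _ ≤ ((n + n) + (m - 4)) + ((m - 4) / 3) * (n - 2) := by gcongr
    _ = 2 * n + (m - 4) + ((m - 4) / 3) * (n - 2) := by ring

lemma induce_adj {S : Finset (ℤ × ℤ)} {u v : (S : Set (ℤ × ℤ))}
    (h : GridZ.Adj u.1 v.1) : (GridZ.induce (S : Set (ℤ × ℤ))).Adj u v := h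

lemma reach_horiz (S : Finset (ℤ × ℤ)) (i a : ℤ) : ∀ b : ℤ, a ≤ b →
    ((∀ j, a ≤ j → j ≤ b → (i, j) ∈ S) →
    ∀ (ha : ((i, a) : ℤ × ℤ) ∈ (S : Set (ℤ × ℤ))) (hb : ((i, b) : ℤ × ℤ) ∈ (S : Set (ℤ × ℤ))),
    (GridZ.induce (S : Set (ℤ × ℤ))).Reachable ⟨(i, a), ha⟩ ⟨(i, b), hb⟩) := by
  refine Int.le_induction ?_ ?_
  · intro _ _ _; rfl
  · intro b hab ih h ha hb
    have hbm : ((i, b) : ℤ × ℤ) ∈ (S : Set (ℤ × ℤ)) := by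
      exact_mod_cast h b hab (by omega)
    refine (ih (fun j hj hj' => h j hj (by omega)) ha hbm).trans ?_
    exact SimpleGraph.Adj.reachable (induce_adj (gridZ_adj' (Or.inl ⟨rfl, Or.inr (by ring)⟩)))

lemma reach_vert (S : Finset (ℤ × ℤ)) (j a : ℤ) : ∀ b : ℤ, a ≤ b →
    ((∀ i, a ≤ i → i ≤ b → (i, j) ∈ S) →
    ∀ (ha : ((a, j) : ℤ × ℤ) ∈ (S : Set (ℤ × ℤ))) (hb : ((b, j) : ℤ × ℤ) ∈ (S : Set (ℤ × ℤ))),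
    (GridZ.induce (S : Set (ℤ × ℤ))).Reachable ⟨(a, j), ha⟩ ⟨(b, j), hb⟩) := by
  refine Int.le_induction ?_ ?_
  · intro _ _ _; rfl
  · intro b hab ih h ha hb
    have hbm : ((b, j) : ℤ × ℤ) ∈ (S : Set (ℤ × ℤ)) := by
      exact_mod_cast h b hab (by omega)
    refine (ih (fun i hi hi' => h i hi (by omega)) ha hbm).trans ?_
    exact SimpleGraph.Adj.reachable (induce_adj (gridZ_adj' (Or.inr ⟨rfl, Or.inr (by ring)⟩)))

section DsetLemmas
variable {n m : ℕ}

lemma rowmem (hn : 4 ≤ n) (hm : 4 ≤ m) {j : ℤ} (h1 : 2 ≤ j) (h2 : j ≤ (m:ℤ) - 1) :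
    ((2:ℤ), j) ∈ Dset n m := by
  rw [mem_Dset]
  rcases eq_or_lt_of_le h1 with h | h
  · exact Or.inl ⟨by omega, by omega, h.symm⟩
  rcases eq_or_lt_of_le h2 with h' | h'
  · exact Or.inr (Or.inl ⟨by omega, by omega, h'⟩)
  · exact Or.inr (Or.inr (Or.inl ⟨rfl, by omega, by omega⟩))

lemma colmem (hn : 4 ≤ n) (hm : 4 ≤ m) {c r : ℤ} (hc : c = 2 ∨ c = (m:ℤ) - 1)
    (h1 : 1 ≤ r) (h2 : r ≤ (n:ℤ)) : ((r, c) : ℤ × ℤ) ∈ Dset n m := by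
  rw [mem_Dset]
  rcases hc with rfl | rfl
  · exact Or.inl ⟨h1, h2, rfl⟩
  · exact Or.inr (Or.inl ⟨h1, h2, rfl⟩)

lemma hub_mem (hn : 4 ≤ n) (hm : 4 ≤ m) : ((2:ℤ), (2:ℤ)) ∈ Dset n m :=
  rowmem hn hm (by omega) (by omega)

lemma reach2 (hn : 4 ≤ n) (hm : 4 ≤ m) {j : ℤ} (h1 : 2 ≤ j) (h2 : j ≤ (m:ℤ) - 1)
    (hj : ((2:ℤ), j) ∈ ((Dset n m : Finset (ℤ × ℤ)) : Set (ℤ × ℤ))) :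
    (GridZ.induce ((Dset n m : Finset (ℤ × ℤ)) : Set (ℤ × ℤ))).Reachable
      ⟨((2:ℤ), (2:ℤ)), Finset.mem_coe.mpr (hub_mem hn hm)⟩ ⟨((2:ℤ), j), hj⟩ :=
  reach_horiz (Dset n m) 2 2 j h1
    (fun j' hj1 hj2 => rowmem hn hm hj1 (le_trans hj2 h2)) _ _

lemma reach_hub (hn : 4 ≤ n) (hm : 4 ≤ m) (p : ℤ × ℤ)
    (hp : p ∈ ((Dset n m : Finset (ℤ × ℤ)) : Set (ℤ × ℤ))) :
    (GridZ.induce ((Dset n m : Finset (ℤ × ℤ)) : Set (ℤ × ℤ))).Reachable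
      ⟨p, hp⟩ ⟨((2:ℤ), (2:ℤ)), Finset.mem_coe.mpr (hub_mem hn hm)⟩ := by
  set S := Dset n m with hS
  have hp' := Finset.mem_coe.mp hp
  rw [mem_Dset] at hp'
  obtain ⟨i, j⟩ := p
  have hcol : ∀ c : ℤ, c = 2 ∨ c = (m:ℤ) - 1 → ∀ (hij : ((i, c) : ℤ × ℤ) ∈ (S : Set (ℤ × ℤ)))
      (h2c : ((2, c) : ℤ × ℤ) ∈ (S : Set (ℤ × ℤ))), 1 ≤ i → i ≤ (n:ℤ) →
      (GridZ.induce (S : Set (ℤ × ℤ))).Reachable ⟨(i, c), hij⟩ ⟨(2, c), h2c⟩ := by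
    intro c hc hij h2c hi1 hi2
    rcases le_total i 2 with hle | hle
    · exact reach_vert S c i 2 hle (fun r h1 h2 => colmem hn hm hc (by omega) (by omega)) _ _
    · exact (reach_vert S c 2 i hle
        (fun r h1 h2 => colmem hn hm hc (by omega) (by omega)) _ _).symm
  rcases hp' with ⟨h1, h2, h3⟩ | ⟨h1, h2, h3⟩ | ⟨h1, h2, h3⟩ | ⟨k, h1, h2, h3, h4, h5⟩
  · subst h3
    have := hcol 2 (Or.inl rfl) hp (Finset.mem_coe.mpr (hub_mem hn hm)) h1 h2
    exact this
  · subst h3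
    have hcS : ((2, (m:ℤ) - 1) : ℤ × ℤ) ∈ S := colmem hn hm (Or.inr rfl) (by omega) (by omega)
    have r1 := hcol ((m:ℤ) - 1) (Or.inr rfl) hp (Finset.mem_coe.mpr hcS) h1 h2
    exact r1.trans (reach2 hn hm (by omega) le_rfl (Finset.mem_coe.mpr hcS)).symm
  · subst h1
    exact (reach2 hn hm (by omega) (by omega) hp).symm
  · subst h5
    have hc1 : (2:ℤ) + 3 * k ≤ (m:ℤ) - 1 := by omega
    have hcS : ((2, (2:ℤ) + 3 * k) : ℤ × ℤ) ∈ S := rowmem hn hm (by omega) hc1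
    have h3S : ((3, (2:ℤ) + 3 * k) : ℤ × ℤ) ∈ S := by
      rw [hS, mem_Dset]; exact Or.inr (Or.inr (Or.inr ⟨k, h1, h2, le_rfl, by omega, rfl⟩))
    have r1 := reach_vert S ((2:ℤ) + 3 * k) 3 i h3
      (fun r hr1 hr2 => by
        rw [hS, mem_Dset]; exact Or.inr (Or.inr (Or.inr ⟨k, h1, h2, hr1, by omega, rfl⟩)))
      (Finset.mem_coe.mpr h3S) hp
    have r2 : (GridZ.induce (S : Set (ℤ × ℤ))).Adj
        ⟨(2, (2:ℤ) + 3 * k), Finset.mem_coe.mpr hcS⟩ ⟨(3, (2:ℤ) + 3 * k), Finset.mem_coe.mpr h3S⟩ :=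
      induce_adj (gridZ_adj' (Or.inr ⟨rfl, by norm_num⟩))
    exact r1.symm.trans (r2.reachable.symm.trans
      (reach2 hn hm (by omega) hc1 (Finset.mem_coe.mpr hcS)).symm)

lemma Dset_isCDS (hn : 4 ≤ n) (hm : 4 ≤ m) : IsCDS n m (Dset n m) := by
  have hK : 3 * (((m - 4) / 3 : ℕ) : ℤ) ≤ (m:ℤ) - 4 := by omega
  refine ⟨?_, ?_, ?_⟩
  · intro p hp
    rw [Finset.mem_coe, mem_Dset] at hp
    obtain ⟨i, j⟩ := p
    rcases hp with ⟨h1, h2, h3⟩ | ⟨h1, h2, h3⟩ | ⟨h1, h2, h3⟩ | ⟨k, h1, h2, h3, h4, h5⟩ <;>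
      exact ⟨by omega, by omega, by omega, by omega⟩
  · rw [SimpleGraph.connected_iff]
    refine ⟨fun u v => ?_, ⟨⟨((2:ℤ), (2:ℤ)), Finset.mem_coe.mpr (hub_mem hn hm)⟩⟩⟩
    obtain ⟨p, hp⟩ := u
    obtain ⟨q, hq⟩ := v
    exact (reach_hub hn hm p hp).trans (reach_hub hn hm q hq).symm
  · rintro ⟨i, j⟩ ⟨hv1, hv2, hv3, hv4⟩
    by_cases hj3 : j ≤ 3
    · refine ⟨(i, 2), mem_Dset.mpr (Or.inl ⟨hv1, hv2, rfl⟩), ?_⟩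
      have hj : j = 1 ∨ j = 2 ∨ j = 3 := by omega
      rcases hj with rfl | rfl | rfl
      · exact Or.inr (gridZ_adj' (Or.inl ⟨rfl, by omega⟩))
      · exact Or.inl rfl
      · exact Or.inr (gridZ_adj' (Or.inl ⟨rfl, by omega⟩))
    · by_cases hjm : (m:ℤ) - 2 ≤ j
      · refine ⟨(i, (m:ℤ) - 1), mem_Dset.mpr (Or.inr (Or.inl ⟨hv1, hv2, rfl⟩)), ?_⟩
        have hj : j = (m:ℤ) - 2 ∨ j = (m:ℤ) - 1 ∨ j = (m:ℤ) := by omega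
        rcases hj with h | h | h
        · exact Or.inr (gridZ_adj' (Or.inl ⟨rfl, by omega⟩))
        · exact Or.inl (by rw [h])
        · exact Or.inr (gridZ_adj' (Or.inl ⟨rfl, by omega⟩))
      · by_cases hi3 : i ≤ 3
        · refine ⟨(2, j), mem_Dset.mpr (Or.inr (Or.inr (Or.inl ⟨rfl, by omega, by omega⟩))), ?_⟩
          have hi : i = 1 ∨ i = 2 ∨ i = 3 := by omega
          rcases hi with rfl | rfl | rfl
          · exact Or.inr (gridZ_adj' (Or.inr ⟨rfl, by omega⟩))
          · exact Or.inl rfl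
          · exact Or.inr (gridZ_adj' (Or.inr ⟨rfl, by omega⟩))
        · refine ⟨(i, 2 + 3 * ((j - 1) / 3)),
            mem_Dset.mpr (Or.inr (Or.inr (Or.inr ⟨(j - 1) / 3, by omega, by omega, by omega,
              hv2, rfl⟩))), ?_⟩
          have h5 : 2 + 3 * ((j - 1) / 3) = j ∨ 2 + 3 * ((j - 1) / 3) = j + 1 ∨
              2 + 3 * ((j - 1) / 3) = j - 1 := by omega
          rcases h5 with h | h | h
          · exact Or.inl (by rw [h])
          · exact Or.inr (gridZ_adj' (Or.inl ⟨rfl, Or.inl h⟩))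
          · exact Or.inr (gridZ_adj' (Or.inl ⟨rfl, Or.inr h⟩))

end DsetLemmas

lemma isCDS_swap {n m : ℕ} {S : Finset (ℤ × ℤ)} (h : IsCDS n m S) :
    IsCDS m n (S.image Prod.swap) := by
  obtain ⟨hsub, hconn, hdom⟩ := h
  have hadjswap : ∀ u v : ℤ × ℤ, GridZ.Adj u v → GridZ.Adj u.swap v.swap := by
    intro u v huv
    rw [gridZ_adj] at huv ⊢
    simpa [add_comm] using huv
  refine ⟨?_, ?_, ?_⟩
  · intro p hp
    rw [Finset.mem_coe, Finset.mem_image] at hp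
    obtain ⟨q, hq, rfl⟩ := hp
    obtain ⟨a1, a2, a3, a4⟩ := hsub (Finset.mem_coe.mpr hq)
    exact ⟨a3, a4, a1, a2⟩
  · have hmapsto : ∀ p : ℤ × ℤ, p ∈ (S : Set (ℤ × ℤ)) →
        p.swap ∈ ((S.image Prod.swap : Finset (ℤ × ℤ)) : Set (ℤ × ℤ)) := by
      intro p hp
      exact Finset.mem_coe.mpr (Finset.mem_image.mpr ⟨p, Finset.mem_coe.mp hp, rfl⟩)
    let f : GridZ.induce (S : Set (ℤ × ℤ)) →g
        GridZ.induce ((S.image Prod.swap : Finset (ℤ × ℤ)) : Set (ℤ × ℤ)) :=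
      ⟨fun p => ⟨p.1.swap, hmapsto p.1 p.2⟩, fun {a b} hab => hadjswap _ _ hab⟩
    refine SimpleGraph.Connected.map f ?_ hconn
    rintro ⟨p, hp⟩
    rw [Finset.mem_coe, Finset.mem_image] at hp
    obtain ⟨q, hq, hq'⟩ := hp
    refine ⟨⟨q, Finset.mem_coe.mpr hq⟩, ?_⟩
    exact Subtype.ext hq'
  · rintro v hv
    obtain ⟨b1, b2, b3, b4⟩ := hv
    obtain ⟨u, hu, h⟩ := hdom v.swap ⟨b3, b4, b1, b2⟩
    refine ⟨u.swap, Finset.mem_image.mpr ⟨u, hu, rfl⟩, ?_⟩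
    rcases h with rfl | h
    · exact Or.inl (by rw [Prod.swap_swap])
    · exact Or.inr (by simpa using hadjswap _ _ h)

lemma connDomNum_le_card {n m : ℕ} {S : Finset (ℤ × ℤ)} (h : IsCDS n m S) :
    connDomNum n m ≤ S.card :=
  Nat.sInf_le ⟨S, h, rfl⟩

/-- For `m, n ≥ 4`,
`γ_c(G_{n,m}) ≤ min{2n + (m-4) + ⌊(m-4)/3⌋(n-2), 2m + (n-4) + ⌊(n-4)/3⌋(m-2)}`. -/
theorem connDomNum_upper_bound (n m : ℕ) (hn : 4 ≤ n) (hm : 4 ≤ m) :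
    connDomNum n m ≤
      min (2 * n + (m - 4) + ((m - 4) / 3) * (n - 2))
        (2 * m + (n - 4) + ((n - 4) / 3) * (m - 2)) := by
  refine le_min ?_ ?_
  · exact (connDomNum_le_card (Dset_isCDS hn hm)).trans (Dset_card_le hn hm)
  · calc connDomNum n m ≤ ((Dset m n).image Prod.swap).card :=
        connDomNum_le_card (isCDS_swap (Dset_isCDS hm hn))
      _ ≤ (Dset m n).card := Finset.card_image_le
      _ ≤ _ := Dset_card_le hm hn
end
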